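/- The power allocation game always has at least one pure Nash equilibrium: there exists (α₁*, α₂*) ∈ [0,1]² such that for each k ∈ {1,2}, u_k(α_k*, α_{-k}*) ≥ u_k(α_k, α_{-k}*) for all α_k ∈ [0,1]. -/

import Mathlib

open Real Set

/-- Utility of a player with direct gains `gk1 gk2`, cross gains `gi1 gi2`,
own action `a`, opponent action `b`. -/
noncomputable def u (gk1 gk2 gi1 gi2 a b : ℝ) : ℝ :=
  Real.logb 2 (1 + a * gk1 / (1 + b * gi1)) +
  Real.logb 2 (1 + (1 - a) * gk2 / (1 + (1 - b) * gi2))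

/-- Clamp a real number to `[0,1]`. -/
noncomputable def clampPA (m : ℝ) : ℝ := max 0 (min 1 m)

lemma clampPA_mem (m : ℝ) : clampPA m ∈ Set.Icc (0 : ℝ) 1 := by
  constructor
  · exact le_max_left 0 _
  · exact max_le (by norm_num) (min_le_left 1 m)

lemma clampPA_sq (m : ℝ) {a : ℝ} (ha : a ∈ Set.Icc (0 : ℝ) 1) :
    (clampPA m - m) ^ 2 ≤ (a - m) ^ 2 := by
  obtain ⟨ha0, ha1⟩ := ha
  rcases le_or_gt m 0 with hm | hm
  · have : clampPA m = 0 := by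
      unfold clampPA
      rw [min_eq_right (by linarith), max_eq_left hm]
    rw [this]; nlinarith
  · rcases le_or_gt 1 m with hm1 | hm1
    · have : clampPA m = 1 := by
        unfold clampPA
        rw [min_eq_left hm1]; norm_num
      rw [this]; nlinarith
    · have : clampPA m = m := by
        unfold clampPA
        rw [min_eq_right hm1.le, max_eq_right hm.le]
      rw [this]; nlinarith [sq_nonneg (a - m)]

lemma continuous_clampPA : Continuous clampPA :=
  continuous_const.max (continuous_const.min continuous_id)

/-- Best response of a player with direct gains `gk1 gk2`, cross gains `gi1 gi2`
against opponent action `b`. -/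
noncomputable def brPA (gk1 gk2 gi1 gi2 b : ℝ) : ℝ :=
  clampPA ((1 + (1 + (1 - b) * gi2) / gk2 - (1 + b * gi1) / gk1) / 2)

lemma brPA_mem (gk1 gk2 gi1 gi2 b : ℝ) : brPA gk1 gk2 gi1 gi2 b ∈ Set.Icc (0:ℝ) 1 :=
  clampPA_mem _

lemma continuous_brPA (gk1 gk2 gi1 gi2 : ℝ) :
    Continuous (fun b => brPA gk1 gk2 gi1 gi2 b) := by
  apply continuous_clampPA.comp
  fun_prop

/-- Key quadratic inequality: the clamped vertex maximizes the product. -/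
lemma quad_le (c1 c2 m a t : ℝ) (hc1 : 0 < c1) (hc2 : 0 < c2)
    (hm : 2 * c1 * c2 * m = c1 * c2 + c1 - c2)
    (hsq : (t - m) ^ 2 ≤ (a - m) ^ 2) :
    (1 + a * c1) * (1 + (1 - a) * c2) ≤ (1 + t * c1) * (1 + (1 - t) * c2) := by
  have keyeq : (1 + t * c1) * (1 + (1 - t) * c2) - (1 + a * c1) * (1 + (1 - a) * c2)
      = c1 * c2 * ((a - m) ^ 2 - (t - m) ^ 2) := by
    linear_combination (a - t) * hm
  nlinarith [mul_nonneg (mul_pos hc1 hc2).le (sub_nonneg.2 hsq)]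

/-- The best response maximizes the utility. -/
lemma brPA_opt (gk1 gk2 gi1 gi2 : ℝ) (hk1 : 0 < gk1) (hk2 : 0 < gk2)
    (hi1 : 0 < gi1) (hi2 : 0 < gi2) {b : ℝ} (hb : b ∈ Set.Icc (0:ℝ) 1)
    {a : ℝ} (ha : a ∈ Set.Icc (0:ℝ) 1) :
    u gk1 gk2 gi1 gi2 a b ≤ u gk1 gk2 gi1 gi2 (brPA gk1 gk2 gi1 gi2 b) b := by
  obtain ⟨hb0, hb1⟩ := hb
  obtain ⟨ha0, ha1⟩ := ha
  have hd1pos : 0 < 1 + b * gi1 := by nlinarith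
  have hd2pos : 0 < 1 + (1 - b) * gi2 := by nlinarith
  obtain ⟨c1, hc1⟩ : ∃ c : ℝ, c = gk1 / (1 + b * gi1) := ⟨_, rfl⟩
  obtain ⟨c2, hc2⟩ : ∃ c : ℝ, c = gk2 / (1 + (1 - b) * gi2) := ⟨_, rfl⟩
  have hc1pos : 0 < c1 := hc1 ▸ div_pos hk1 hd1pos
  have hc2pos : 0 < c2 := hc2 ▸ div_pos hk2 hd2pos
  obtain ⟨m, hm⟩ : ∃ x : ℝ, x = (1 + 1 / c2 - 1 / c1) / 2 := ⟨_, rfl⟩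
  have hbr : brPA gk1 gk2 gi1 gi2 b = clampPA m := by
    unfold brPA
    rw [hm, hc1, hc2, one_div_div, one_div_div]
  have hmeq : 2 * c1 * c2 * m = c1 * c2 + c1 - c2 := by
    rw [hm]
    field_simp
  obtain ⟨ht0, ht1⟩ := clampPA_mem m
  have hrw : ∀ x : ℝ, 0 ≤ x → x ≤ 1 →
      u gk1 gk2 gi1 gi2 x b = Real.logb 2 ((1 + x * c1) * (1 + (1 - x) * c2)) := by
    intro x hx0 hx1
    have hx1' : 0 < 1 + x * c1 := by nlinarith [mul_nonneg hx0 hc1pos.le]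
    have hx2' : 0 < 1 + (1 - x) * c2 := by
      nlinarith [mul_nonneg (by linarith : (0:ℝ) ≤ 1 - x) hc2pos.le]
    rw [Real.logb_mul (ne_of_gt hx1') (ne_of_gt hx2')]
    unfold u
    rw [hc1, hc2]
    ring_nf
  rw [hbr, hrw a ha0 ha1, hrw (clampPA m) ht0 ht1]
  have hsq : (clampPA m - m) ^ 2 ≤ (a - m) ^ 2 := clampPA_sq m ⟨ha0, ha1⟩
  have hprod := quad_le c1 c2 m a (clampPA m) hc1pos hc2pos hmeq hsq
  have hapos : 0 < (1 + a * c1) * (1 + (1 - a) * c2) := by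
    have h1 : 0 < 1 + a * c1 := by nlinarith [mul_nonneg ha0 hc1pos.le]
    have h2 : 0 < 1 + (1 - a) * c2 := by
      nlinarith [mul_nonneg (by linarith : (0:ℝ) ≤ 1 - a) hc2pos.le]
    exact mul_pos h1 h2
  exact Real.logb_le_logb_of_le (by norm_num) hapos hprod

theorem pa_exists_pure_NE
    (g111 g112 g121 g122 g211 g212 g221 g222 : ℝ)
    (h111 : 0 < g111) (h112 : 0 < g112) (h121 : 0 < g121) (h122 : 0 < g122)
    (h211 : 0 < g211) (h212 : 0 < g212) (h221 : 0 < g221) (h222 : 0 < g222) :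
    ∃ a1 a2 : ℝ, a1 ∈ Set.Icc (0 : ℝ) 1 ∧ a2 ∈ Set.Icc (0 : ℝ) 1 ∧
      (∀ a1' ∈ Set.Icc (0 : ℝ) 1,
        u g111 g112 g121 g122 a1' a2 ≤ u g111 g112 g121 g122 a1 a2) ∧
      (∀ a2' ∈ Set.Icc (0 : ℝ) 1,
        u g221 g222 g211 g212 a2' a1 ≤ u g221 g222 g211 g212 a2 a1) := by
  -- fixed point of composed best responses via IVT
  set T : ℝ → ℝ := fun b => brPA g221 g222 g211 g212 (brPA g111 g112 g121 g122 b) with hT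
  set f : ℝ → ℝ := fun b => T b - b with hf
  have hcont : ContinuousOn f (Set.Icc 0 1) := by
    apply Continuous.continuousOn
    exact ((continuous_brPA _ _ _ _).comp (continuous_brPA _ _ _ _)).sub continuous_id
  have hsub := intermediate_value_Icc' (by norm_num : (0:ℝ) ≤ 1) hcont
  have h0 : (0 : ℝ) ∈ Set.Icc (f 1) (f 0) := by
    constructor
    · have := (brPA_mem g221 g222 g211 g212 (brPA g111 g112 g121 g122 1)).2
      simp only [hf, hT]
      linarith
    · have := (brPA_mem g221 g222 g211 g212 (brPA g111 g112 g121 g122 0)).1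
      simp only [hf, hT]
      linarith
  obtain ⟨b, hbmem, hfb⟩ := hsub h0
  have hTb : T b = b := by
    have : T b - b = 0 := hfb
    linarith
  refine ⟨brPA g111 g112 g121 g122 b, b, brPA_mem _ _ _ _ _, hbmem, ?_, ?_⟩
  · intro a1' ha1'
    exact brPA_opt g111 g112 g121 g122 h111 h112 h121 h122 hbmem ha1'
  · intro a2' ha2'
    have := brPA_opt g221 g222 g211 g212 h221 h222 h211 h212
      (brPA_mem g111 g112 g121 g122 b) ha2'
    simp only [hT] at hTb
    rw [hTb] at this
    exact this
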